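/- Let L be a smooth function on a Poisson manifold and G a smooth function satisfying X_L²(G) = Λ G where Λ = -2(cL + L₀) (note X_L(Λ) = 0). Define the recursion G₁ = G, G_{n+1} = X_L(G)·G_n + (1/n)·G·X_L(G_n). Then each G_n satisfies X_L²(G_n) = n²·Λ·G_n, i.e., X_L²(G_n) = -2n²(cL + L₀)G_n. -/
import Mathlib

theorem recursion_preserves_eigenproperty
    {A : Type*} [CommRing A] [Algebra ℚ A]
    (X : Derivation ℚ A A) (Λ G : A)
    (hΛ : X Λ = 0) (hG : X (X G) = Λ * G)
    (Gseq : ℕ → A) (h1 : Gseq 1 = G)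
    (hrec : ∀ n : ℕ, 1 ≤ n →
      Gseq (n + 1) = X G * Gseq n + ((n : ℚ)⁻¹) • (G * X (Gseq n))) :
    ∀ n : ℕ, 1 ≤ n → X (X (Gseq n)) = ((n : ℚ)^2) • (Λ * Gseq n) := by
  intro n hn
  induction n, hn using Nat.le_induction with
  | base => simp [h1, hG]
  | succ n hn ih =>
    have hn0 : (n : ℚ) ≠ 0 := Nat.cast_ne_zero.mpr (by omega)
    have huv : (algebraMap ℚ A) (n : ℚ) * (algebraMap ℚ A) ((n : ℚ)⁻¹) = 1 := by
      rw [← map_mul, mul_inv_cancel₀ hn0, map_one]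
    have hXu : X ((algebraMap ℚ A) (n : ℚ) ^ 2) = 0 := by
      rw [← map_pow, Derivation.map_algebraMap]
    rw [hrec n hn]
    simp only [map_add, map_smul, Derivation.leibniz, hG, hΛ, ih, map_mul, smul_eq_mul,
      smul_add, Nat.cast_add, Nat.cast_one, Algebra.smul_def, map_pow, map_add, map_one,
      Derivation.map_algebraMap, hXu, mul_zero, zero_mul, zero_add, add_zero, map_zero]
    linear_combination (2 * X G * Gseq n * Λ * (algebraMap ℚ A) (n : ℚ)
      - 2 * X (Gseq n) * Λ * G) * huv
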